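/- Let a₁, a₂, a₃, a₄, a₅, a₆, a₇ be real constants with a₁ ≠ 0, a₂ ≠ 0, a₅ ≠ 0 and a₃ = a₁ + 1, and let H, L be positive real numbers with H^{a₃+a₄} ≠ L^{a₃+a₄}. Then the quadruple (H, L, A, B) of real numbers satisfies the Dixit–Pindyck system: a₅ H + B H^{−a₁} − A H^{a₂} − a₆ = 0, −a₁ B H^{−a₃} − a₂ A H^{a₄} + a₅ = 0, a₅ L + B L^{−a₁} − A L^{a₂} − a₇ = 0, −a₁ B L^{−a₃} − a₂ A L^{a₄} + a₅ = 0, if and only if: (i) A = a₅ (H^{a₃} − L^{a₃}) / (a₂ (H^{a₃+a₄} − L^{a₃+a₄})) and B = a₅ (H·L)^{a₃} (H^{a₄} − L^{a₄}) / (a₁ (H^{a₃+a₄} − L^{a₃+a₄})), and (ii) the pair (H, L) satisfies the reduced two-variable system H = a₆/a₅ − ( a₁ H^{a₂} (L^{a₃} − H^{a₃}) + a₂ H L^{a₃} (H^{a₄} − L^{a₄}) ) / ( a₁ a₂ (H^{a₃+a₄} − L^{a₃+a₄}) ) and L = a₇/a₅ − ( a₁ L^{a₂} (L^{a₃} − H^{a₃})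 + a₂ H^{a₃} L (H^{a₄} − L^{a₄}) ) / ( a₁ a₂ (H^{a₃+a₄} − L^{a₃+a₄}) ). -/

import Mathlib

open Real

/-- Equivalence between the four-equation Dixit–Pindyck system
in `(H, L, A, B)` and the reduced two-variable system in `(H, L)` together with
the explicit formulas recovering `A` and `B`. -/
theorem dixit_pindyck_system_reduction
    (a₁ a₂ a₃ a₄ a₅ a₆ a₇ : ℝ) (ha₁ : a₁ ≠ 0) (ha₂ : a₂ ≠ 0) (ha₅ : a₅ ≠ 0)
    (ha₃ : a₃ = a₁ + 1)
    (H L : ℝ) (hH : 0 < H) (hL : 0 < L)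
    (hHL : H ^ (a₃ + a₄) ≠ L ^ (a₃ + a₄))
    (A B : ℝ) :
    (a₅ * H + B * H ^ (-a₁) - A * H ^ a₂ - a₆ = 0 ∧
     -a₁ * B * H ^ (-a₃) - a₂ * A * H ^ a₄ + a₅ = 0 ∧
     a₅ * L + B * L ^ (-a₁) - A * L ^ a₂ - a₇ = 0 ∧
     -a₁ * B * L ^ (-a₃) - a₂ * A * L ^ a₄ + a₅ = 0)
    ↔
    ((A = a₅ * (H ^ a₃ - L ^ a₃) / (a₂ * (H ^ (a₃ + a₄) - L ^ (a₃ + a₄))) ∧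
      B = a₅ * (H * L) ^ a₃ * (H ^ a₄ - L ^ a₄) /
            (a₁ * (H ^ (a₃ + a₄) - L ^ (a₃ + a₄)))) ∧
     (H = a₆ / a₅ -
        (a₁ * H ^ a₂ * (L ^ a₃ - H ^ a₃) + a₂ * H * L ^ a₃ * (H ^ a₄ - L ^ a₄)) /
          (a₁ * a₂ * (H ^ (a₃ + a₄) - L ^ (a₃ + a₄))) ∧
      L = a₇ / a₅ -
        (a₁ * L ^ a₂ * (L ^ a₃ - H ^ a₃) + a₂ * H ^ a₃ * L * (H ^ a₄ - L ^ a₄)) /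
          (a₁ * a₂ * (H ^ (a₃ + a₄) - L ^ (a₃ + a₄))))) := by
  have eH1 : H ^ (-a₁) = H * (H ^ a₃)⁻¹ := by
    rw [show (-a₁ : ℝ) = 1 + (-a₃) by rw [ha₃]; ring, Real.rpow_add hH, Real.rpow_one,
      Real.rpow_neg hH.le]
  have eL1 : L ^ (-a₁) = L * (L ^ a₃)⁻¹ := by
    rw [show (-a₁ : ℝ) = 1 + (-a₃) by rw [ha₃]; ring, Real.rpow_add hL, Real.rpow_one,
      Real.rpow_neg hL.le]
  have eH3 : H ^ (-a₃) = (H ^ a₃)⁻¹ := Real.rpow_neg hH.le a₃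
  have eL3 : L ^ (-a₃) = (L ^ a₃)⁻¹ := Real.rpow_neg hL.le a₃
  have eH34 : H ^ (a₃ + a₄) = H ^ a₃ * H ^ a₄ := Real.rpow_add hH _ _
  have eL34 : L ^ (a₃ + a₄) = L ^ a₃ * L ^ a₄ := Real.rpow_add hL _ _
  have eHL : (H * L) ^ a₃ = H ^ a₃ * L ^ a₃ := Real.mul_rpow hH.le hL.le
  rw [eH34, eL34] at hHL
  rw [eH1, eL1, eH3, eL3, eH34, eL34, eHL]
  have hP : (0:ℝ) < H ^ a₃ := Real.rpow_pos_of_pos hH _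
  have hR : (0:ℝ) < L ^ a₃ := Real.rpow_pos_of_pos hL _
  set P := H ^ a₃ with hPd
  set Q := H ^ a₄ with hQd
  set R := L ^ a₃ with hRd
  set S := L ^ a₄ with hSd
  set U := H ^ a₂ with hUd
  set V := L ^ a₂ with hVd
  have hD : P * Q - R * S ≠ 0 := sub_ne_zero.mpr hHL
  have hP' : P ≠ 0 := ne_of_gt hP
  have hR' : R ≠ 0 := ne_of_gt hR
  constructor
  · rintro ⟨e1, e2, e3, e4⟩

    field_simp at e1 e2 e3 e4
    refine ⟨⟨?_, ?_⟩, ?_, ?_⟩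
    · field_simp
      linear_combination e4 - e2
    · field_simp
      linear_combination (S*R)*e2 - (Q*P)*e4
    · field_simp
      refine mul_left_cancel₀ hP' ?_
      linear_combination (a₁*a₂*(P*Q-R*S))*e1 + (-(a₂*H*S*R) - a₁*P*U)*e2 + (a₂*H*Q*P + a₁*P*U)*e4
    · field_simp
      refine mul_left_cancel₀ hR' ?_
      linear_combination (a₁*a₂*(P*Q-R*S))*e3 + (-(a₂*L*S*R) - a₁*R*V)*e2 + (a₂*L*Q*P + a₁*R*V)*e4

  · rintro ⟨⟨hA, hB⟩, red1, red2⟩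
    subst hA hB

    field_simp at red1 red2
    refine ⟨?_, ?_, ?_, ?_⟩
    · field_simp
      linear_combination red1
    · field_simp
      ring
    · field_simp
      linear_combination red2
    · field_simp
      ring
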